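/- arXiv:1605.09609 — 3 statements merged into one kernel-verified Lean document; each statement's English description precedes it below -/
import Mathlib

section
/- Let n ≥ 3 and let κ₁ ≤ κ₂ ≤ … ≤ κₙ be real numbers with H := κ₁ + … + κₙ > 0. If Σᵢ κᵢ² < H²/(n−1), then κ₁ + κ₂ ≥ H/(2(n−1)); that is, the cylindrical estimate implies uniform two-convexity. -/
/-- for n ≥ 3 the cylindrical estimate Σκᵢ² < H²/(n−1), H > 0, implies
uniform two-convexity κ₁ + κ₂ ≥ H/(2(n−1)). -/
theorem stmt_3 (n : ℕ) (hn : 3 ≤ n) (κ : Fin n → ℝ)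
    (hmono : ∀ i j : Fin n, i ≤ j → κ i ≤ κ j)
    (hH : 0 < ∑ i, κ i)
    (hcyl : (∑ i, κ i ^ 2) < (∑ i, κ i) ^ 2 / ((n : ℝ) - 1)) :
    κ ⟨0, by omega⟩ + κ ⟨1, by omega⟩ ≥ (∑ i, κ i) / (2 * ((n : ℝ) - 1)) := by
  set i0 : Fin n := ⟨0, by omega⟩ with hi0
  set i1 : Fin n := ⟨1, by omega⟩ with hi1
  have hne : i1 ≠ i0 := by simp [hi0, hi1, Fin.ext_iff]
  set T : Finset (Fin n) := (Finset.univ.erase i0).erase i1 with hT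
  have hmem1 : i1 ∈ Finset.univ.erase i0 := Finset.mem_erase.2 ⟨hne, Finset.mem_univ _⟩
  have hcard : (T.card : ℝ) = (n : ℝ) - 2 := by
    have : T.card = n - 2 := by
      rw [hT, Finset.card_erase_of_mem hmem1, Finset.card_erase_of_mem (Finset.mem_univ _),
        Finset.card_univ, Fintype.card_fin]
      omega
    rw [this]
    have : (2:ℕ) ≤ n := by omega
    push_cast [Nat.cast_sub this]
    ring
  have hsum : ∑ i ∈ T, κ i = (∑ i, κ i) - κ i0 - κ i1 := by
    have h1 : κ i1 + ∑ i ∈ T, κ i = ∑ i ∈ Finset.univ.erase i0, κ i :=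
      Finset.add_sum_erase _ _ hmem1
    have h2 : κ i0 + ∑ i ∈ Finset.univ.erase i0, κ i = ∑ i, κ i :=
      Finset.add_sum_erase _ _ (Finset.mem_univ _)
    linarith
  have hsumsq : ∑ i ∈ T, κ i ^ 2 = (∑ i, κ i ^ 2) - κ i0 ^ 2 - κ i1 ^ 2 := by
    have h1 : κ i1 ^ 2 + ∑ i ∈ T, κ i ^ 2 = ∑ i ∈ Finset.univ.erase i0, κ i ^ 2 :=
      Finset.add_sum_erase _ (fun i => κ i ^ 2) hmem1
    have h2 : κ i0 ^ 2 + ∑ i ∈ Finset.univ.erase i0, κ i ^ 2 = ∑ i, κ i ^ 2 :=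
      Finset.add_sum_erase _ (fun i => κ i ^ 2) (Finset.mem_univ _)
    linarith
  have hCS : (∑ i ∈ T, κ i) ^ 2 ≤ (T.card : ℝ) * ∑ i ∈ T, κ i ^ 2 := by
    exact_mod_cast sq_sum_le_card_mul_sum_sq (s := T) (f := κ)
  rw [hcard, hsum, hsumsq] at hCS
  set H : ℝ := ∑ i, κ i with hHdef
  set Q : ℝ := ∑ i, κ i ^ 2 with hQdef
  set a : ℝ := κ i0
  set b : ℝ := κ i1
  have hN2 : (0:ℝ) < (n:ℝ) - 2 := by
    have : (3:ℝ) ≤ (n:ℝ) := by exact_mod_cast hn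
    linarith
  have hN1 : (0:ℝ) < (n:ℝ) - 1 := by linarith
  -- hcyl : Q < H^2 / (n-1)
  have hcyl' : Q * ((n:ℝ) - 1) < H ^ 2 := by
    have := (lt_div_iff₀ hN1).mp hcyl
    linarith
  by_contra hcon
  push_neg at hcon
  have hcon' : a + b < H / (2 * ((n:ℝ) - 1)) := hcon
  have hcon2 : (a + b) * (2 * ((n:ℝ) - 1)) < H := by
    have := (lt_div_iff₀ (by positivity : (0:ℝ) < 2 * ((n:ℝ) - 1))).mp hcon'
    linarith
  nlinarith [hCS, hcyl', hcon2, sq_nonneg (a - b), sq_nonneg (a + b),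
    mul_pos hN2 hN1, sq_nonneg H,
    mul_nonneg (le_of_lt hN2) (sq_nonneg (a + b)),
    mul_nonneg hH.le (sub_nonneg.2 hcon2.le),
    mul_nonneg (mul_nonneg hN2.le hN1.le) (sq_nonneg (a - b)),
    mul_nonneg (sub_nonneg.2 hcon2.le) (sub_nonneg.2 hcon2.le)]
end

section
/- Let h₁ ≥ 0 and C₁ > 0 and let h : [0, ℓ] → ℝ be a differentiable function with h(0) ≤ h₁ and h(ℓ) =: h₀ ≥ 2·h₁. Suppose that whenever h(s) ≥ h₁ one has h'(s) ≤ √(4·C₁·h(s)). Then ℓ ≥ √(h₀/(16·C₁)). -/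
open Set Filter Topology

/-- the mean-value/integration argument behind the girth estimate:
if h(0) ≤ h₁, h(ℓ) = h₀ ≥ 2h₁ and h' ≤ √(4C₁h) wherever h ≥ h₁ on [0,ℓ], then
ℓ ≥ √(h₀/(16C₁)). -/
theorem stmt_7 (h₁ C₁ ℓ h₀ : ℝ) (hh₁ : 0 ≤ h₁) (hC₁ : 0 < C₁) (hℓ : 0 ≤ ℓ)
    (h h' : ℝ → ℝ)
    (hderiv : ∀ s ∈ Set.Icc (0:ℝ) ℓ, HasDerivAt h (h' s) s)
    (h0 : h 0 ≤ h₁) (hend : h ℓ = h₀) (hh₀ : 2 * h₁ ≤ h₀)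
    (hbound : ∀ s ∈ Set.Icc (0:ℝ) ℓ, h₁ ≤ h s → h' s ≤ Real.sqrt (4 * C₁ * h s)) :
    Real.sqrt (h₀ / (16 * C₁)) ≤ ℓ := by
  have hC₁s : 0 < Real.sqrt C₁ := Real.sqrt_pos.mpr hC₁
  rcases le_or_gt h₀ 0 with hneg | hpos
  · have : Real.sqrt (h₀ / (16 * C₁)) = 0 := by
      rw [Real.sqrt_eq_zero']
      apply div_nonpos_of_nonpos_of_nonneg hneg
      positivity
    rw [this]; exact hℓ
  -- Key: for every ε > 0, √h₀ ≤ √h₁ + ε + (√C₁ + ε) ℓ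
  have key : ∀ ε : ℝ, 0 < ε →
      Real.sqrt h₀ ≤ Real.sqrt h₁ + ε + (Real.sqrt C₁ + ε) * ℓ := by
    intro ε hε
    set c : ℝ := Real.sqrt h₁ + ε with hc
    set K : ℝ := Real.sqrt C₁ + ε with hK
    have hcpos : 0 < c := by have := Real.sqrt_nonneg h₁; positivity
    have hKpos : 0 < K := by positivity
    have hc2 : h₁ < c ^ 2 := by
      have hs : Real.sqrt h₁ ^ 2 = h₁ := Real.sq_sqrt hh₁
      nlinarith [Real.sqrt_nonneg h₁]
    set g : ℝ → ℝ := fun s => (c + K * s) ^ 2 - h s with hg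
    -- claim: g > 0 on [0, ℓ]
    have claim : ∀ s ∈ Icc (0:ℝ) ℓ, 0 < g s := by
      by_contra hcon
      push_neg at hcon
      obtain ⟨s₀, hs₀, hgs₀⟩ := hcon
      set S : Set ℝ := {s | s ∈ Icc (0:ℝ) ℓ ∧ g s ≤ 0} with hS
      have hgc : ContinuousOn g (Icc 0 ℓ) := by
        apply ContinuousOn.sub
        · fun_prop
        · intro s hs; exact (hderiv s hs).continuousAt.continuousWithinAt
      have hSsub : S ⊆ Icc 0 ℓ := fun x hx => hx.1
      have hScl : IsClosed S := by
        have : S = Icc 0 ℓ ∩ g ⁻¹' Iic 0 := by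
          ext x; exact Iff.rfl
        rw [this]
        exact hgc.preimage_isClosed_of_isClosed isClosed_Icc isClosed_Iic
      have hScomp : IsCompact S := isCompact_Icc.of_isClosed_subset hScl hSsub
      have hSne : S.Nonempty := ⟨s₀, hs₀, hgs₀⟩
      set T : ℝ := sInf S with hT
      have hTS : T ∈ S := hScomp.sInf_mem hSne
      have hTIcc : T ∈ Icc (0:ℝ) ℓ := hTS.1
      have hg0 : 0 < g 0 := by
        simp only [hg, mul_zero, add_zero]
        linarith
      have hT0 : 0 < T := by
        rcases lt_or_eq_of_le hTIcc.1 with h | h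
        · exact h
        · exfalso
          have h0S : (0:ℝ) ∈ S := h.symm ▸ hTS
          linarith [h0S.2]
      have hbdd : BddBelow S := ⟨0, fun x hx => hx.1.1⟩
      have hlt : ∀ s, 0 ≤ s → s < T → 0 < g s := by
        intro s h0s hsT
        by_contra hneg'
        push_neg at hneg'
        have : s ∈ S := ⟨⟨h0s, hsT.le.trans hTIcc.2⟩, hneg'⟩
        exact absurd (csInf_le hbdd this) (not_le.mpr hsT)
      -- g T = 0
      have hgT0 : g T = 0 := by
        refine le_antisymm hTS.2 ?_
        have hcT : ContinuousAt g T := by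
          have : ContinuousAt h T := (hderiv T hTIcc).continuousAt
          fun_prop
        have htd : Tendsto g (𝓝[<] T) (𝓝 (g T)) :=
          (hcT.tendsto).mono_left nhdsWithin_le_nhds
        refine ge_of_tendsto htd ?_
        filter_upwards [Ioo_mem_nhdsLT_of_mem (⟨hT0, le_refl T⟩ : T ∈ Ioc 0 T)] with s hs
        exact (hlt s hs.1.le hs.2).le
      have hhT : h T = (c + K * T) ^ 2 := by
        have : (c + K * T) ^ 2 - h T = 0 := hgT0
        linarith
      have hwT : 0 < c + K * T := by positivity
      have hh₁T : h₁ ≤ h T := by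
        rw [hhT]
        nlinarith [hc2, mul_nonneg hKpos.le hTIcc.1, sq_nonneg (K * T),
          mul_nonneg hcpos.le (mul_nonneg hKpos.le hTIcc.1)]
      -- bound on h' T
      have hhb : h' T ≤ 2 * Real.sqrt C₁ * (c + K * T) := by
        have hb := hbound T hTIcc hh₁T
        have heq : 4 * C₁ * h T = (2 * Real.sqrt C₁ * (c + K * T)) ^ 2 := by
          rw [hhT, mul_pow, mul_pow, Real.sq_sqrt hC₁.le]; ring
        rw [heq, Real.sqrt_sq (by positivity)] at hb
        exact hb
      -- derivative of g at T
      have hg' : HasDerivAt g (2 * (c + K * T) * K - h' T) T := by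
        have h1 : HasDerivAt (fun s : ℝ => c + K * s) K T := by
          simpa using ((hasDerivAt_id T).const_mul K).const_add c
        have h2 := h1.pow 2
        exact (h2.sub (hderiv T hTIcc)).congr_deriv (by norm_num)
      -- slope from the left is nonpositive
      have hd0 : 2 * (c + K * T) * K - h' T ≤ 0 := by
        have hts : Tendsto (slope g T) (𝓝[<] T) (𝓝 (2 * (c + K * T) * K - h' T)) :=
          (hasDerivAt_iff_tendsto_slope.mp hg').mono_left
            (nhdsWithin_mono _ (fun x hx => ne_of_lt hx))
        refine le_of_tendsto hts ?_
        filter_upwards [Ioo_mem_nhdsLT_of_mem (⟨hT0, le_refl T⟩ : T ∈ Ioc 0 T)] with s hs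
        have hgs := hlt s hs.1.le hs.2
        rw [slope_def_field]
        rw [hgT0]
        apply div_nonpos_of_nonneg_of_nonpos
        · linarith
        · linarith [hs.2]
      nlinarith [hhb, hwT, hε]
    -- apply claim at ℓ
    have hend' := claim ℓ ⟨hℓ, le_refl ℓ⟩
    have hlt' : h₀ < (c + K * ℓ) ^ 2 := by
      simp only [hg] at hend'; linarith [hend ▸ hend']
    have hwl : 0 < c + K * ℓ := by positivity
    have := Real.sqrt_le_sqrt hlt'.le
    rwa [Real.sqrt_sq hwl.le] at this
  -- take ε → 0
  have hmain : Real.sqrt h₀ ≤ Real.sqrt h₁ + Real.sqrt C₁ * ℓ := by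
    refine le_of_forall_pos_le_add ?_
    intro δ hδ
    have hden : (0:ℝ) < 1 + ℓ := by linarith
    have hε : 0 < δ / (1 + ℓ) := by positivity
    have hkey := key _ hε
    have hmul : δ / (1 + ℓ) * (1 + ℓ) = δ := div_mul_cancel₀ δ (ne_of_gt hden)
    nlinarith [hkey]
  -- arithmetic conclusion
  have h1le : Real.sqrt h₁ ≤ Real.sqrt (h₀ / 2) := Real.sqrt_le_sqrt (by linarith)
  have h2 : Real.sqrt (h₀ / 2) ≤ 3 / 4 * Real.sqrt h₀ := by
    have hsq : h₀ / 2 ≤ (3 / 4 * Real.sqrt h₀) ^ 2 := by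
      have := Real.sq_sqrt hpos.le
      nlinarith
    have := Real.sqrt_le_sqrt hsq
    rwa [Real.sqrt_sq (by positivity)] at this
  have hquarter : 1 / 4 * Real.sqrt h₀ ≤ Real.sqrt C₁ * ℓ := by linarith
  have heq : Real.sqrt (h₀ / (16 * C₁)) = Real.sqrt h₀ / (4 * Real.sqrt C₁) := by
    rw [Real.sqrt_div hpos.le,
      show (16:ℝ) * C₁ = (4 * Real.sqrt C₁) ^ 2 by
        rw [mul_pow, Real.sq_sqrt hC₁.le]; norm_num,
      Real.sqrt_sq (by positivity)]
  rw [heq, div_le_iff₀ (by positivity)]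
  nlinarith [hquarter]
end

section
/- Let g : ℝ → ℝ be continuous with g(h) > 0 for all large h and g(h) = O(√h) as h → ∞, and fix τ ∈ (0,1). Then there exists a sequence h_m → ∞ such that g(h_m) ≤ 2·τ^{−1/2}·g(τ·h_m) for all m. -/
/-- iteration lemma: if g is continuous, eventually positive, and
g(h) = O(√h) as h → ∞, then for any τ ∈ (0,1) there is a sequence h_m → ∞ with
g(h_m) ≤ 2·τ^{−1/2}·g(τ·h_m) for all m. -/
theorem stmt_19 (g : ℝ → ℝ) (hg : Continuous g)
    (hpos : ∃ h₂ : ℝ, ∀ h ≥ h₂, 0 < g h)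
    (hO : ∃ C > (0:ℝ), ∃ h₃ : ℝ, ∀ h ≥ h₃, g h ≤ C * Real.sqrt h)
    (τ : ℝ) (hτ : τ ∈ Set.Ioo (0:ℝ) 1) :
    ∃ hm : ℕ → ℝ, Filter.Tendsto hm Filter.atTop Filter.atTop ∧
      ∀ m, g (hm m) ≤ 2 / Real.sqrt τ * g (τ * hm m) := by
  obtain ⟨hτ0, hτ1⟩ := hτ
  obtain ⟨h₂, hh₂⟩ := hpos
  obtain ⟨C, hC, h₃, hh₃⟩ := hO
  set s : ℝ := Real.sqrt τ with hs
  have hsτ : 0 < s := Real.sqrt_pos.mpr hτ0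
  have key : ∀ M : ℝ, ∃ h, M ≤ h ∧ g h ≤ 2 / s * g (τ * h) := by
    intro M
    by_contra hcon
    push_neg at hcon
    set h₀ : ℝ := max (max M h₂) (max h₃ 1) with hh₀
    have h₀1 : (1:ℝ) ≤ h₀ := le_max_of_le_right (le_max_right _ _)
    have h₀pos : 0 < h₀ := lt_of_lt_of_le one_pos h₀1
    have hM : M ≤ h₀ := le_max_of_le_left (le_max_left _ _)
    have h₀3 : h₃ ≤ h₀ := le_max_of_le_right (le_max_left _ _)
    have hgh₀ : 0 < g h₀ := hh₂ _ (le_max_of_le_left (le_max_right _ _))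
    -- each h ≥ M satisfies g(τh) < s/2 * g h
    have step : ∀ h, M ≤ h → g (τ * h) < s / 2 * g h := by
      intro h hh
      have h1 : s/2 * (2/s * g (τ*h)) < s/2 * g h :=
        mul_lt_mul_of_pos_left (hcon h hh) (by positivity)
      have h2 : s/2 * (2/s * g (τ*h)) = g (τ*h) := by field_simp
      linarith
    have hτk : ∀ k : ℕ, h₀ ≤ h₀ / τ ^ k := by
      intro k
      rw [le_div_iff₀ (pow_pos hτ0 k)]
      nlinarith [pow_le_one₀ hτ0.le hτ1.le (n := k)]
    have claim : ∀ k : ℕ, g h₀ ≤ (s/2)^k * g (h₀ / τ ^ k) := by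
      intro k
      induction k with
      | zero => simp
      | succ k ih =>
        have huk : τ * (h₀ / τ ^ (k+1)) = h₀ / τ ^ k := by
          field_simp
          ring
        have h1 : g (h₀ / τ ^ k) < s / 2 * g (h₀ / τ ^ (k+1)) := by
          rw [← huk]
          exact step _ (le_trans hM (hτk (k+1)))
        calc g h₀ ≤ (s/2)^k * g (h₀ / τ ^ k) := ih
          _ ≤ (s/2)^k * (s/2 * g (h₀ / τ ^ (k+1))) :=
            mul_le_mul_of_nonneg_left h1.le (by positivity)
          _ = (s/2)^(k+1) * g (h₀ / τ ^ (k+1)) := by ring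
    have bound : ∀ k : ℕ, g h₀ ≤ C * Real.sqrt h₀ * (1/2)^k := by
      intro k
      have h1 : g (h₀ / τ ^ k) ≤ C * Real.sqrt (h₀ / τ ^ k) :=
        hh₃ _ (le_trans h₀3 (hτk k))
      have h2 : Real.sqrt (h₀ / τ ^ k) = Real.sqrt h₀ / s ^ k := by
        have hsk : Real.sqrt (τ ^ k) = s ^ k := by
          rw [show τ ^ k = (s ^ k) ^ 2 by
            rw [← Real.sq_sqrt hτ0.le, ← hs]; ring]
          exact Real.sqrt_sq (pow_nonneg hsτ.le k)
        rw [Real.sqrt_div h₀pos.le, hsk]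
      have h3 : (0:ℝ) < s ^ k := pow_pos hsτ k
      calc g h₀ ≤ (s/2)^k * g (h₀ / τ ^ k) := claim k
        _ ≤ (s/2)^k * (C * (Real.sqrt h₀ / s ^ k)) := by
            rw [← h2]
            exact mul_le_mul_of_nonneg_left h1 (by positivity)
        _ = C * Real.sqrt h₀ * (1/2)^k := by
            rw [div_pow, div_pow]
            field_simp
            ring
    have hCs : 0 < C * Real.sqrt h₀ := by positivity
    obtain ⟨k, hk⟩ := exists_pow_lt_of_lt_one (div_pos hgh₀ hCs) (by norm_num : (1:ℝ)/2 < 1)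
    have := bound k
    rw [lt_div_iff₀ hCs] at hk
    nlinarith
  choose f hf1 hf2 using key
  refine ⟨fun m => f m, ?_, fun m => hf2 m⟩
  exact Filter.tendsto_atTop_mono (fun m => hf1 m) tendsto_natCast_atTop_atTop
end
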